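/- In the natural edge labeling of NC_W(γ), if [u, v] is an interval of length two and (s, t) is the label of a maximal chain of [u, v], then there exists a reflection s' such that (t, s') is also the label of a maximal chain of [u, v]; specifically s' = tst works. -/

import Mathlib

open scoped RealInnerProductSpace
open Module

noncomputable section

variable {V : Type*} [NormedAddCommGroup V] [InnerProductSpace ℝ V]

/-- `g` acts as the orthogonal reflection in the hyperplane orthogonal to `α`. -/
def reflFormula (α : V) (g : V ≃ₗᵢ[ℝ] V) : Prop :=
  ∀ v, g v = v - (2 * ⟪α, v⟫ / ⟪α, α⟫) • α

/-- `g` is an orthogonal reflection. -/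
def IsReflection (g : V ≃ₗᵢ[ℝ] V) : Prop :=
  ∃ α : V, α ≠ 0 ∧ reflFormula α g

/-- A finite real reflection group: a finite subgroup of the orthogonal group
generated by its reflections. -/
def IsReflectionGroup (W : Subgroup (V ≃ₗᵢ[ℝ] V)) : Prop :=
  Finite W ∧ Subgroup.closure {g | g ∈ W ∧ IsReflection g} = W

/-- Reflection length: the least `k` such that `w` is a product of `k` reflections. -/
def refLen (W : Subgroup (V ≃ₗᵢ[ℝ] V)) (w : W) : ℕ :=
  sInf {k | ∃ l : List W, l.length = k ∧ (∀ t ∈ l, IsReflection (t : W).1) ∧ l.prod = w}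

/-- The absolute order on `W`. -/
def absLe (W : Subgroup (V ≃ₗᵢ[ℝ] V)) (u v : W) : Prop :=
  refLen W u + refLen W (u⁻¹ * v) = refLen W v

/-- Covering relation of the absolute order. -/
def covers (W : Subgroup (V ≃ₗᵢ[ℝ] V)) (u v : W) : Prop :=
  absLe W u v ∧ u ≠ v ∧ ∀ z, absLe W u z → absLe W z v → z = u ∨ z = v

/-- The fixed subspace of an isometry. -/
def fixedSpace (g : V ≃ₗᵢ[ℝ] V) : Submodule ℝ V where
  carrier := {v | g v = v}
  add_mem' := by
    intro a b ha hb
    simp only [Set.mem_setOf_eq, map_add] at *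
    rw [ha, hb]
  zero_mem' := by simp
  smul_mem' := by
    intro c a ha
    simp only [Set.mem_setOf_eq, map_smul] at *
    rw [ha]

/-- A root system for the reflection group `W`. -/
def IsRootSystemFor (W : Subgroup (V ≃ₗᵢ[ℝ] V)) (Φ : Set V) : Prop :=
  Φ.Finite ∧ (∀ α ∈ Φ, α ≠ 0) ∧ (∀ α ∈ Φ, -α ∈ Φ) ∧
  (∀ α ∈ Φ, ∀ c : ℝ, c • α ∈ Φ → c = 1 ∨ c = -1) ∧
  (∀ α ∈ Φ, ∃ t ∈ W, reflFormula α t) ∧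
  (∀ t ∈ W, IsReflection t → ∃ α ∈ Φ, reflFormula α t) ∧
  (∀ g ∈ W, ∀ α ∈ Φ, g α ∈ Φ)

/-- A simple system for `Φ`: roots `σ 1, …, σ ℓ` which are linearly independent and
such that every root is a nonnegative or nonpositive combination of them. -/
def IsSimpleSystem (Φ : Set V) {ℓ : ℕ} (σ : Fin ℓ → V) : Prop :=
  (∀ i, σ i ∈ Φ) ∧ LinearIndependent ℝ σ ∧
  ∀ α ∈ Φ, (∃ c : Fin ℓ → ℝ, (∀ i, 0 ≤ c i) ∧ α = ∑ i, c i • σ i) ∨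
           (∃ c : Fin ℓ → ℝ, (∀ i, 0 ≤ c i) ∧ -α = ∑ i, c i • σ i)

/-- `γ` is a Coxeter element of `W`: a product, in some order, of the reflections in
the `ℓ` simple roots of some simple system of the root system `Φ`. -/
def IsCoxeterElement (W : Subgroup (V ≃ₗᵢ[ℝ] V)) (Φ : Set V) (ℓ : ℕ) (γ : W) : Prop :=
  ∃ σ : Fin ℓ → V, IsSimpleSystem Φ σ ∧
    ∃ t : Fin ℓ → W, (∀ i, reflFormula (σ i) (t i).1) ∧
      ∃ l : List (Fin ℓ), l.Nodup ∧ (∀ i, i ∈ l) ∧ (l.map t).prod = γ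

/-- `l` is a maximal (saturated) chain from `u` to `v` in the absolute order. -/
def IsMaximalChain (W : Subgroup (V ≃ₗᵢ[ℝ] V)) (u v : W) (l : List W) : Prop :=
  l.head? = some u ∧ l.getLast? = some v ∧ l.Chain' (covers W)

/-- The label of a chain under the natural edge labeling `λ (x, y) = x⁻¹ * y`. -/
def chainLabels (W : Subgroup (V ≃ₗᵢ[ℝ] V)) (l : List W) : List W :=
  l.zipWith (fun x y => x⁻¹ * y) l.tail

end


noncomputable section
variable {V : Type*} [NormedAddCommGroup V] [InnerProductSpace ℝ V]

-- reflection is an involution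
lemma refl_sq {g : V ≃ₗᵢ[ℝ] V} (h : IsReflection g) : g * g = 1 := by
  obtain ⟨α, hα, hf⟩ := h
  have hαα : ⟪α, α⟫ ≠ 0 := by
    simpa using (inner_self_ne_zero (𝕜 := ℝ)).2 hα
  ext v
  have h1 : g v = v - (2 * ⟪α, v⟫ / ⟪α, α⟫) • α := hf v
  have h2 : g (g v) = g v - (2 * ⟪α, g v⟫ / ⟪α, α⟫) • α := hf (g v)
  have hin : ⟪α, g v⟫ = -⟪α, v⟫ := by
    rw [h1]
    rw [inner_sub_right, real_inner_smul_right]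
    field_simp
    ring
  show g (g v) = v
  rw [h2, hin, h1]
  have : (2 * -⟪α, v⟫ / ⟪α, α⟫) = -(2 * ⟪α, v⟫ / ⟪α, α⟫) := by ring
  rw [this, neg_smul]
  abel

lemma refl_ne_one {g : V ≃ₗᵢ[ℝ] V} (h : IsReflection g) : g ≠ 1 := by
  obtain ⟨α, hα, hf⟩ := h
  intro hg
  have := hf α
  rw [hg] at this
  simp only [LinearIsometryEquiv.coe_one, id_eq] at this
  have hαα : ⟪α, α⟫ ≠ 0 := by simpa using (inner_self_ne_zero (𝕜 := ℝ)).2 hα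
  have h0 : (2 * ⟪α, α⟫ / ⟪α, α⟫) • α = 0 := sub_eq_self.mp this.symm
  rw [mul_div_assoc, div_self hαα, mul_one] at h0
  exact hα (by simpa using smul_eq_zero.1 h0 |>.resolve_left (by norm_num))

lemma refl_conj {g s : V ≃ₗᵢ[ℝ] V} (h : IsReflection s) :
    IsReflection (g * s * g⁻¹) := by
  obtain ⟨α, hα, hf⟩ := h
  refine ⟨g α, fun h0 => hα (by simpa using congrArg g.symm h0), fun v => ?_⟩
  have key : (g * s * g⁻¹) v = g (s (g⁻¹ v)) := rfl
  rw [key, hf (g⁻¹ v)]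
  have h1 : ⟪α, g⁻¹ v⟫ = ⟪g α, v⟫ := by
    rw [← LinearIsometryEquiv.inner_map_map g α (g⁻¹ v)]
    congr 1
    exact (g.apply_symm_apply v)
  have h2 : ⟪α, α⟫ = ⟪g α, g α⟫ := (LinearIsometryEquiv.inner_map_map g α α).symm
  rw [map_sub, map_smul, h1, h2]
  congr 1
  exact (g.apply_symm_apply v)

variable {W : Subgroup (V ≃ₗᵢ[ℝ] V)}

lemma refl_sq_W {t : W} (h : IsReflection (t : W).1) : t * t = 1 :=
  Subtype.ext (refl_sq h)

lemma refl_inv_W {t : W} (h : IsReflection (t : W).1) : t⁻¹ = t :=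
  inv_eq_of_mul_eq_one_right (refl_sq_W h)

lemma exists_refl_list (hW : IsReflectionGroup W) (w : W) :
    ∃ l : List W, (∀ t ∈ l, IsReflection (t : W).1) ∧ l.prod = w := by
  obtain ⟨w, hw⟩ := w
  have key : ∀ x (hx : x ∈ W), ∃ l : List W,
      (∀ t ∈ l, IsReflection (t : W).1) ∧ ((l.prod : W) : V ≃ₗᵢ[ℝ] V) = x := by
    intro x hx
    rw [← hW.2] at hx
    induction hx using Subgroup.closure_induction with
    | mem x hx => exact ⟨[⟨x, hW.2 ▸ Subgroup.subset_closure hx⟩], by simpa using hx.2, rfl⟩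
    | one => exact ⟨[], by simp, rfl⟩
    | mul x y hx hy ihx ihy =>
        obtain ⟨l1, h1, h1p⟩ := ihx
        obtain ⟨l2, h2, h2p⟩ := ihy
        refine ⟨l1 ++ l2, ?_, ?_⟩
        · intro t ht; rcases List.mem_append.1 ht with h | h
          · exact h1 t h
          · exact h2 t h
        · rw [List.prod_append]; push_cast [h1p, h2p]; rfl
    | inv x hx ihx =>
        obtain ⟨l, h1, h1p⟩ := ihx
        refine ⟨l.reverse, fun t ht => h1 t (List.mem_reverse.1 ht), ?_⟩
        have hmap : l.map (fun t => t⁻¹) = l.map id :=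
          List.map_congr_left (fun t ht => refl_inv_W (h1 t ht))
        have : l.reverse.prod = (l.prod)⁻¹ := by
          rw [List.prod_inv_reverse, hmap, List.map_id]
        rw [this, ← h1p]; rfl
  obtain ⟨l, h1, h2⟩ := key w hw
  exact ⟨l, h1, Subtype.ext h2⟩

lemma refLen_spec (hW : IsReflectionGroup W) (w : W) :
    ∃ l : List W, l.length = refLen W w ∧ (∀ t ∈ l, IsReflection (t : W).1) ∧ l.prod = w := by
  have hne : {k | ∃ l : List W, l.length = k ∧ (∀ t ∈ l, IsReflection (t : W).1) ∧ l.prod = w}.Nonempty := by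
    obtain ⟨l, h1, h2⟩ := exists_refl_list hW w
    exact ⟨l.length, l, rfl, h1, h2⟩
  exact Nat.sInf_mem hne

lemma refLen_le {w : W} {l : List W} (h1 : ∀ t ∈ l, IsReflection (t : W).1)
    (h2 : l.prod = w) : refLen W w ≤ l.length :=
  Nat.sInf_le ⟨l, rfl, h1, h2⟩

lemma refLen_eq_zero (hW : IsReflectionGroup W) {w : W} (h : refLen W w = 0) : w = 1 := by
  obtain ⟨l, hl, _, hp⟩ := refLen_spec hW w
  rw [h, List.length_eq_zero_iff] at hl
  rw [← hp, hl, List.prod_nil]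

lemma refLen_mul_le (hW : IsReflectionGroup W) (x y : W) :
    refLen W (x * y) ≤ refLen W x + refLen W y := by
  obtain ⟨l1, h1l, h1r, h1p⟩ := refLen_spec hW x
  obtain ⟨l2, h2l, h2r, h2p⟩ := refLen_spec hW y
  have := refLen_le (l := l1 ++ l2) (w := x * y) ?_ ?_
  · simpa [h1l, h2l] using this
  · intro t ht; rcases List.mem_append.1 ht with h | h
    · exact h1r t h
    · exact h2r t h
  · rw [List.prod_append, h1p, h2p]

lemma refLen_refl {w : W} (h : IsReflection (w : W).1) : refLen W w = 1 := by
  have h1 : refLen W w ≤ 1 := refLen_le (l := [w]) (by simpa using h) (by simp)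
  have h2 : refLen W w ≠ 0 := by
    intro h0
    obtain ⟨l, hl, _, hp⟩ := Nat.sInf_mem (⟨1, [w], rfl, by simpa using h, by simp⟩ :
      {k | ∃ l : List W, l.length = k ∧ (∀ t ∈ l, IsReflection (t : W).1) ∧ l.prod = w}.Nonempty)
    rw [show refLen W w = sInf _ from rfl] at h0
    rw [h0, List.length_eq_zero_iff] at hl
    rw [hl, List.prod_nil] at hp
    exact refl_ne_one h (congrArg Subtype.val hp.symm)
  omega

lemma refLen_one : refLen W (1 : W) = 0 :=
  Nat.le_zero.1 (by simpa using refLen_le (W := W) (w := 1) (l := []) (by simp) (by simp))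

lemma refl_of_refLen_one (hW : IsReflectionGroup W) {w : W} (h : refLen W w = 1) :
    IsReflection (w : W).1 := by
  obtain ⟨l, hl, hr, hp⟩ := refLen_spec hW w
  rw [h, List.length_eq_one_iff] at hl
  obtain ⟨a, rfl⟩ := hl
  simp only [List.prod_singleton] at hp
  subst hp
  exact hr a (by simp)

end

/-- In the natural edge labeling of `NC_W(γ)`, if `[u, v]` has length two and
`(s, t)` labels a maximal chain `u ⋖ z ⋖ v`, then `(t, s')` with `s' = t * s * t`
labels the maximal chain `u ⋖ u * t ⋖ v` of `[u, v]`. -/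
theorem statement7 {V : Type*} [NormedAddCommGroup V] [InnerProductSpace ℝ V]
    [FiniteDimensional ℝ V]
    (W : Subgroup (V ≃ₗᵢ[ℝ] V)) (hW : IsReflectionGroup W)
    (Φ : Set V) (hΦ : IsRootSystemFor W Φ)
    (γ : W) (hγ : IsCoxeterElement W Φ (Module.finrank ℝ V) γ)
    (u v : W) (huv : absLe W u v) (hvγ : absLe W v γ)
    (hlen : refLen W v = refLen W u + 2)
    (s t z : W) (hz1 : covers W u z) (hz2 : covers W z v)
    (hs : u⁻¹ * z = s) (ht : z⁻¹ * v = t) :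
    ∃ s' : W, s' = t * s * t ∧ IsReflection s'.1 ∧
      covers W u (u * t) ∧ covers W (u * t) v ∧ (u * t)⁻¹ * v = s' := by
  -- basic facts
  obtain ⟨a1, hne1, _⟩ := hz1
  obtain ⟨a2, hne2, _⟩ := hz2
  rw [absLe, hs] at a1
  rw [absLe, ht] at a2
  have hst : refLen W s + refLen W t = 2 := by omega
  have hsne : refLen W s ≠ 0 := fun h0 => hne1 (by
    have := refLen_eq_zero hW (hs ▸ h0)
    have : z = u := by
      have : u⁻¹ * z = 1 := hs ▸ this
      group at this ⊢
      rw [← mul_one u, ← this]; group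
    exact this.symm ▸ rfl)
  have htne : refLen W t ≠ 0 := fun h0 => hne2 (by
    have := refLen_eq_zero hW (ht ▸ h0)
    have : v = z := by
      have : z⁻¹ * v = 1 := ht ▸ this
      rw [← mul_one z, ← this]; group
    exact this ▸ rfl)
  have hls : refLen W s = 1 := by omega
  have hlt : refLen W t = 1 := by omega
  have hsr : IsReflection (s : W).1 := refl_of_refLen_one hW hls
  have htr : IsReflection (t : W).1 := refl_of_refLen_one hW hlt
  have htinv : t⁻¹ = t := refl_inv_W htr
  -- v = u * s * t
  have hzeq : z = u * s := by rw [← hs]; group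
  have hveq : v = u * s * t := by rw [← hzeq, ← ht]; group
  -- s' = t * s * t is a reflection
  have hs'r : IsReflection ((t * s * t : W) : V ≃ₗᵢ[ℝ] V) := by
    have h1 : ((t * s * t : W) : V ≃ₗᵢ[ℝ] V)
        = (t : W).1 * (s : W).1 * ((t : W).1)⁻¹ := by
      have : ((t⁻¹ : W) : V ≃ₗᵢ[ℝ] V) = ((t : W).1)⁻¹ := rfl
      rw [← this, htinv]; rfl
    rw [h1]
    exact refl_conj hsr
  have hls' : refLen W (t * s * t) = 1 := refLen_refl hs'r
  -- v = (u * t) * (t * s * t)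
  have hveq2 : v = (u * t) * (t * s * t) := by
    rw [hveq, show (u * t) * (t * s * t) = u * (t * t) * s * t by group,
      refl_sq_W htr, mul_one]
  -- length of u * t
  have hut_le : refLen W (u * t) ≤ refLen W u + 1 := by
    have := refLen_mul_le hW u t; omega
  have hv_le : refLen W v ≤ refLen W (u * t) + 1 := by
    have := refLen_mul_le hW (u * t) (t * s * t)
    rw [← hveq2] at this; omega
  have hut_len : refLen W (u * t) = refLen W u + 1 := by omega
  -- absLe facts
  have hinv1 : u⁻¹ * (u * t) = t := by group
  have hinv2 : (u * t)⁻¹ * v = t * s * t := by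
    rw [hveq2]; group
  have habs1 : absLe W u (u * t) := by
    rw [absLe, hinv1, hlt, hut_len]
  have habs2 : absLe W (u * t) v := by
    rw [absLe, hinv2, hls', hut_len, hlen]
  refine ⟨t * s * t, rfl, hs'r, ⟨habs1, ?_, ?_⟩, ⟨habs2, ?_, ?_⟩, hinv2⟩
  · intro h
    have : t = 1 := by rw [← hinv1, ← h]; group
    exact htne (this ▸ refLen_one)
  · intro w hw1 hw2
    rw [absLe] at hw1 hw2
    rw [hut_len] at hw2
    have : refLen W (u⁻¹ * w) = 0 ∨ refLen W (w⁻¹ * (u * t)) = 0 := by omega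
    rcases this with h0 | h0
    · left
      have := refLen_eq_zero hW h0
      rw [← mul_one u, ← this]; group
    · right
      have := refLen_eq_zero hW h0
      exact inv_mul_eq_one.mp this
  · intro h
    rw [h] at hut_len; omega
  · intro w hw1 hw2
    rw [absLe] at hw1 hw2
    rw [hut_len] at hw1
    rw [hlen] at hw2
    have : refLen W ((u * t)⁻¹ * w) = 0 ∨ refLen W (w⁻¹ * v) = 0 := by omega
    rcases this with h0 | h0
    · left
      have := refLen_eq_zero hW h0
      rw [← mul_one (u * t), ← this]; group
    · right
      have := refLen_eq_zero hW h0
      exact inv_mul_eq_one.mp this
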